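/- Let R be a commutative ring, M an R-module, T = tor_𝒬(M) its 𝒬-torsion submodule, and L a Lucas R-module containing M/T as an essential submodule such that L/(M/T) is 𝒬-torsion. Then the composite φ : M ↠ M/T ↪ L is an ℒ-envelope of M with the unique mapping property, where ℒ is the class of all Lucas R-modules. -/

import Mathlib

open CategoryTheory

universe u

/-- An ideal is dense if its annihilator in `R` is zero. -/
def Ideal.IsDense {R : Type u} [CommRing R] (I : Ideal R) : Prop :=
  ∀ r : R, (∀ a ∈ I, a * r = 0) → r = 0

/-- An ideal is semi-regular if it contains a finitely generated dense subideal. -/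
def Ideal.IsSemiRegular {R : Type u} [CommRing R] (I : Ideal R) : Prop :=
  ∃ J : Ideal R, J ≤ I ∧ J.FG ∧ J.IsDense

/-- Membership in `𝒬`: finitely generated semi-regular ideals. -/
def Ideal.IsInQ {R : Type u} [CommRing R] (I : Ideal R) : Prop :=
  I.FG ∧ I.IsSemiRegular

/-- An `R`-module is `𝒬`-torsion if every element is annihilated by some `I ∈ 𝒬`. -/
def IsQTorsion (R : Type u) [CommRing R] (M : Type u) [AddCommGroup M] [Module R M] : Prop :=
  ∀ x : M, ∃ I : Ideal R, I.IsInQ ∧ ∀ a ∈ I, a • x = 0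

/-- An `R`-module is `𝒬`-torsion-free if no nonzero element is annihilated by any `I ∈ 𝒬`. -/
def IsQTorsionFree (R : Type u) [CommRing R] (M : Type u) [AddCommGroup M] [Module R M] : Prop :=
  ∀ x : M, (∃ I : Ideal R, I.IsInQ ∧ ∀ a ∈ I, a • x = 0) → x = 0

/-- `Ext¹_R(A, B) = 0`. -/
def Ext1Vanishes (R : Type u) [CommRing R] (A B : Type u) [AddCommGroup A] [Module R A]
    [AddCommGroup B] [Module R B] : Prop :=
  Subsingleton (((Ext R (ModuleCat.{u} R) 1).obj (Opposite.op (ModuleCat.of R A))).obj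
    (ModuleCat.of R B))

/-- A Lucas module is a `𝒬`-torsion-free module `M` with `Ext¹_R(R/I, M) = 0` for all `I ∈ 𝒬`. -/
def IsLucasModule (R : Type u) [CommRing R] (M : Type u) [AddCommGroup M] [Module R M] : Prop :=
  IsQTorsionFree R M ∧ ∀ I : Ideal R, I.IsInQ → Ext1Vanishes R (R ⧸ I) M

theorem ext1_extension (R : Type u) [CommRing R] (I : Ideal R) (B : Type u) [AddCommGroup B]
    [Module R B] (hE : Ext1Vanishes R (R ⧸ I) B) (g : I →ₗ[R] B) :
    ∃ y : B, ∀ a : I, g a = (a : R) • y := by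
  set Z : ModuleCat.{u} R := ModuleCat.of R (R ⧸ I)
  set Y : ModuleCat.{u} R := ModuleCat.of R B
  obtain ⟨P⟩ := (HasProjectiveResolution.out (Z := Z))
  set K := P.complex.linearYonedaObj R Y with hK
  haveI : Subsingleton (((Ext R (ModuleCat.{u} R) 1).obj (Opposite.op Z)).obj Y) := hE
  haveI hsub : Subsingleton (K.homology 1) :=
    Equiv.subsingleton ((P.isoExt 1 Y).symm.toLinearEquiv.toEquiv)
  have hexact : K.ExactAt 1 := by
    rw [HomologicalComplex.exactAt_iff_isZero_homology]
    exact ModuleCat.isZero_of_subsingleton _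
  have hexact' : (K.sc' 0 1 2).Exact :=
    (HomologicalComplex.exactAt_iff' K 0 1 2 (by simp) (by simp)).1 hexact
  have hstep := (ShortComplex.moduleCat_exact_iff _).1 hexact'
  have hstep2 : ∀ (φ : P.complex.X 1 ⟶ Y), P.complex.d 2 1 ≫ φ = 0 →
      ∃ ψ : P.complex.X 0 ⟶ Y, P.complex.d 1 0 ≫ ψ = φ := by
    intro φ hφ
    obtain ⟨ψ, hψ⟩ := hstep φ
      (by rw [show ((HomologicalComplex.sc' K 0 1 2).g : _) φ = P.complex.d 2 1 ≫ φ from rfl]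
          exact hφ)
    exact ⟨ψ, hψ⟩
  -- concrete data
  haveI hRproj : Projective (ModuleCat.of R R) :=
    (IsProjective.iff_projective R).mp inferInstance
  have hπ0surj : Function.Surjective (P.π.f 0 : P.complex.X 0 ⟶ Z) :=
    (ModuleCat.epi_iff_surjective _).1 inferInstance
  have hmkQepi : Epi (ModuleCat.ofHom I.mkQ : ModuleCat.of R R ⟶ Z) :=
    (ModuleCat.epi_iff_surjective _).2 (Submodule.mkQ_surjective I)
  set α : P.complex.X 0 ⟶ ModuleCat.of R R :=
    @Projective.factorThru _ _ _ _ _ _ (P.π.f 0 : P.complex.X 0 ⟶ Z) (ModuleCat.ofHom I.mkQ) hmkQepi with hα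
  have hαc : ∀ z : P.complex.X 0, I.mkQ (α z) = (P.π.f 0 : P.complex.X 0 ⟶ Z) z := by
    intro z
    have := @Projective.factorThru_comp _ _ _ _ _ _ (P.π.f 0 : P.complex.X 0 ⟶ Z) (ModuleCat.ofHom I.mkQ) hmkQepi
    calc I.mkQ (α z) = (α ≫ ModuleCat.ofHom I.mkQ) z := rfl
      _ = _ := by exact congrArg (fun (f : P.complex.X 0 ⟶ Z) => f.hom z) this
  have hd10π : ∀ x : P.complex.X 1,
      (P.π.f 0 : P.complex.X 0 ⟶ Z) (P.complex.d 1 0 x) = 0 := by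
    intro x
    have h := P.complex_d_comp_π_f_zero
    calc (P.π.f 0 : P.complex.X 0 ⟶ Z) (P.complex.d 1 0 x)
        = (P.complex.d 1 0 ≫ P.π.f 0) x := rfl
      _ = (0 : P.complex.X 1 ⟶ _) x := by rw [h]
      _ = 0 := rfl
  have hIm : ∀ x : P.complex.X 1, α (P.complex.d 1 0 x) ∈ I := by
    intro x
    rw [← Submodule.Quotient.mk_eq_zero I, ← Submodule.mkQ_apply, hαc, hd10π]
    rfl
  set φ : P.complex.X 1 ⟶ Y := ModuleCat.ofHom (g.comp (LinearMap.codRestrict I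
    (α.hom.comp (P.complex.d 1 0).hom)
    hIm)) with hφdef
  have hφ2 : P.complex.d 2 1 ≫ φ = 0 := by
    ext x
    have hdd : P.complex.d 1 0 (P.complex.d 2 1 x) = 0 := by
      calc P.complex.d 1 0 (P.complex.d 2 1 x) = (P.complex.d 2 1 ≫ P.complex.d 1 0) x := rfl
        _ = (0 : P.complex.X 2 ⟶ _) x := by rw [P.complex.d_comp_d 2 1 0]
        _ = 0 := rfl
    show φ (P.complex.d 2 1 x) = 0
    rw [hφdef]
    show g ⟨α (P.complex.d 1 0 (P.complex.d 2 1 x)), _⟩ = 0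
    have : (⟨α (P.complex.d 1 0 (P.complex.d 2 1 x)), hIm _⟩ : I) = 0 := by
      apply Subtype.ext
      simp [hdd]
    rw [this, map_zero]
  obtain ⟨ψ, hψ⟩ := hstep2 φ hφ2
  have hψd : ∀ u : P.complex.X 1, ψ (P.complex.d 1 0 u) = g ⟨α (P.complex.d 1 0 u), hIm u⟩ := by
    intro u
    calc ψ (P.complex.d 1 0 u) = (P.complex.d 1 0 ≫ ψ) u := rfl
      _ = φ u := by rw [hψ]
      _ = _ := rfl
  have hker : ∀ z : P.complex.X 0, (hz : (P.π.f 0 : P.complex.X 0 ⟶ Z) z = 0) →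
      ψ z = g ⟨α z, by rw [← Submodule.Quotient.mk_eq_zero I, ← Submodule.mkQ_apply, hαc, hz]; rfl⟩ := by
    intro z hz
    obtain ⟨u, hu⟩ := (ShortComplex.moduleCat_exact_iff _).1 P.exact₀ z hz
    subst hu
    exact hψd u
  set β : ModuleCat.of R R ⟶ P.complex.X 0 :=
    @Projective.factorThru _ _ _ _ _ _ (ModuleCat.ofHom I.mkQ) (P.π.f 0 : P.complex.X 0 ⟶ Z)
      ((ModuleCat.epi_iff_surjective _).2 hπ0surj) with hβ
  have hβc : ∀ r : R, (P.π.f 0 : P.complex.X 0 ⟶ Z) (β r) = I.mkQ r := by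
    intro r
    have := @Projective.factorThru_comp _ _ _ _ _ _ (ModuleCat.ofHom I.mkQ) (P.π.f 0 : P.complex.X 0 ⟶ Z)
      ((ModuleCat.epi_iff_surjective _).2 hπ0surj)
    calc (P.π.f 0 : P.complex.X 0 ⟶ Z) (β r) = (β ≫ P.π.f 0) r := rfl
      _ = _ := by exact congrArg (fun (f : ModuleCat.of R R ⟶ Z) => f.hom r) this
  set γ : R →ₗ[R] R := α.hom.comp β.hom with hγdef
  have hγI : ∀ r : R, γ r - r ∈ I := by
    intro r
    rw [← Submodule.Quotient.mk_eq_zero I, Submodule.Quotient.mk_sub,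
      ← Submodule.mkQ_apply, ← Submodule.mkQ_apply]
    have : I.mkQ (γ r) = I.mkQ r := by
      show I.mkQ (α (β r)) = I.mkQ r
      rw [hαc, hβc]
    rw [this, sub_self]
  set δ : R →ₗ[R] I := LinearMap.codRestrict I (γ - LinearMap.id) (fun r => hγI r) with hδdef
  set yy : B := (show B from ψ (β (1:R))) - g (δ (1:R)) with hyy
  refine ⟨yy, ?_⟩
  intro a
  have ha0 : (P.π.f 0 : P.complex.X 0 ⟶ Z) (β (a : R)) = 0 := by
    rw [hβc]
    exact (Submodule.Quotient.mk_eq_zero I).2 a.2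
  have hγa : γ (a : R) ∈ I := by
    have := add_mem (hγI (a : R)) a.2
    rwa [sub_add_cancel] at this
  have h1 : ψ (β (a : R)) = g ⟨γ (a : R), hγa⟩ := by
    rw [hker (β (a:R)) ha0]
    congr 1
  have hβa : β (a : R) = (a : R) • β (1 : R) := by
    rw [← map_smul, smul_eq_mul, mul_one]
  have hδa : δ (a : R) = (a : R) • δ (1 : R) := by
    rw [← map_smul, smul_eq_mul, mul_one]
  have hsplit : (⟨γ (a : R), hγa⟩ : I) = δ (a : R) + a := by
    apply Subtype.ext
    have h2 : ((δ (a:R) + a : I) : R) = (γ (a:R) - (a:R)) + (a:R) := rfl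
    rw [h2]
    ring
  calc g a = g ⟨γ (a:R), hγa⟩ - g (δ (a:R)) := by
        rw [hsplit, map_add]; abel
    _ = (show B from ψ (β (a:R))) - g (δ (a:R)) := by rw [h1]
    _ = (a:R) • (show B from ψ (β (1:R))) - (a:R) • g (δ (1:R)) := by
        simp only [hβa, hδa, map_smul]
    _ = (a:R) • yy := by rw [hyy, smul_sub]


theorem lucas_extend {R : Type u} [CommRing R] {L F : Type u} [AddCommGroup L] [Module R L]
    [AddCommGroup F] [Module R F] (hF : IsLucasModule R F)
    (N0 : Submodule R L)
    (htor : ∀ x : L, ∃ I : Ideal R, I.IsInQ ∧ ∀ a ∈ I, a • x ∈ N0)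
    (f0 : N0 →ₗ[R] F) :
    ∃ g : L →ₗ[R] F, ∀ x : N0, g x = f0 x := by
  set p0 : L →ₗ.[R] F := ⟨N0, f0⟩ with hp0
  set s : Set (L →ₗ.[R] F) := {p | p0 ≤ p} with hs
  obtain ⟨m, hp0m, hm⟩ := zorn_le_nonempty₀ s (fun c hcs hchain y hy => by
    have hdir : DirectedOn (· ≤ ·) c := hchain.directedOn
    refine ⟨LinearPMap.sSup c hdir, ?_, fun z hz => LinearPMap.le_sSup hdir hz⟩
    exact le_trans (hcs hy) (LinearPMap.le_sSup hdir hy)) p0 (show p0 ≤ p0 from le_rfl)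
  -- helper lemmas about m
  have hval : ∀ (z1 z2 : L) (h1 : z1 ∈ m.domain) (h2 : z2 ∈ m.domain), z1 = z2 →
      m ⟨z1, h1⟩ = m ⟨z2, h2⟩ := by
    intro z1 z2 h1 h2 h
    cases h
    rfl
  have hsm : ∀ (r : R) (z : L) (hz : z ∈ m.domain) (hrz : r • z ∈ m.domain),
      m ⟨r • z, hrz⟩ = r • m ⟨z, hz⟩ := by
    intro r z hz hrz
    rw [← LinearPMap.map_smul]
    exact hval _ _ _ _ rfl
  have htop : m.domain = ⊤ := by
    by_contra hne
    obtain ⟨x, hx⟩ : ∃ x : L, x ∉ m.domain := by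
      by_contra h
      push_neg at h
      exact hne (eq_top_iff.2 fun z _ => h z)
    obtain ⟨I, hI, hIx⟩ := htor x
    have hax : ∀ a ∈ I, a • x ∈ m.domain := fun a ha => hp0m.1 (hIx a ha)
    set j : I →ₗ[R] m.domain := LinearMap.codRestrict m.domain
      ((LinearMap.toSpanSingleton R L x).comp I.subtype) (fun a => hax a a.2) with hj
    set gI : I →ₗ[R] F := m.toFun.comp j with hgIdef
    have hgI : ∀ (a : R) (ha : a ∈ I), gI ⟨a, ha⟩ = m ⟨a • x, hax a ha⟩ := by
      intro a ha
      show m.toFun (j ⟨a, ha⟩) = m ⟨a • x, hax a ha⟩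
      rw [show j ⟨a, ha⟩ = ⟨a • x, hax a ha⟩ from Subtype.ext
        (by rfl)]
      rfl
    obtain ⟨y, hy⟩ := ext1_extension R I F (hF.2 I hI) gI
    have key : ∀ (c : R) (hcx : c • x ∈ m.domain), m ⟨c • x, hcx⟩ = c • y := by
      intro c hcx
      have := hF.1 (m ⟨c • x, hcx⟩ - c • y) ⟨I, hI, fun a ha => by
        have hay : a • y = m ⟨a • x, hax a ha⟩ := by
          rw [← hgI a ha, hy ⟨a, ha⟩]
        rw [smul_sub, ← hsm a (c • x) hcx (Submodule.smul_mem _ a hcx),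
          smul_comm a c y, hay, ← hsm c (a • x) (hax a ha)
            (Submodule.smul_mem _ c (hax a ha))]
        exact sub_eq_zero.2 (hval _ _ _ _ (smul_comm a c x))⟩
      exact sub_eq_zero.1 this
    have H : ∀ c : R, c • x = 0 → c • y = 0 := by
      intro c hc
      have h0 : c • x ∈ m.domain := by rw [hc]; exact zero_mem _
      exact (key c h0).symm.trans ((hval _ _ _ _ hc).trans m.map_zero)
    set q := LinearPMap.mkSpanSingleton' (σ := RingHom.id R) x y H with hq
    have hco : ∀ (u : m.domain) (v : q.domain), (u : L) = v → m u = q v := by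
      intro u v huv
      have hv2 : (v : L) ∈ Submodule.span R {x} := by
        rw [← LinearPMap.domain_mkSpanSingleton (σ := RingHom.id R) x y H]
        exact v.2
      obtain ⟨c, hc⟩ := Submodule.mem_span_singleton.1 hv2
      have hucx : (u : L) = c • x := huv.trans hc.symm
      have hcx : c • x ∈ m.domain := by rw [← hucx]; exact u.2
      have h1 : m u = m ⟨c • x, hcx⟩ := by
        have hu : u = ⟨c • x, hcx⟩ := Subtype.ext hucx
        rw [hu]
      have h2 : q v = c • y := by
        have hv : v = ⟨c • x, by rw [hc]; exact v.2⟩ := Subtype.ext hc.symm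
        rw [hv]
        exact LinearPMap.mkSpanSingleton'_apply (σ := RingHom.id R) x y H c _
      rw [h1, h2, key c hcx]
    have hle : m ≤ m.sup q hco := m.left_le_sup q hco
    have hs : m.sup q hco ∈ s := le_trans hp0m hle
    have hcontra : m.sup q hco ≤ m := hm.2 hs hle
    apply hx
    apply hcontra.1
    rw [LinearPMap.domain_sup]
    exact le_sup_right (a := m.domain) (Submodule.mem_span_singleton_self x)
  refine ⟨m.toFun.comp (LinearMap.codRestrict m.domain LinearMap.id
    (fun z => by rw [htop]; trivial)), ?_⟩
  intro x
  show m ⟨x, _⟩ = f0 x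
  exact (hp0m.2 (x := x) (y := ⟨x, by rw [htop]; trivial⟩) rfl).symm


theorem lucas_unique_aux {R : Type u} [CommRing R] {L F : Type u} [AddCommGroup L] [Module R L]
    [AddCommGroup F] [Module R F] (hQTF : IsQTorsionFree R F)
    (N0 : Submodule R L)
    (htor : ∀ x : L, ∃ I : Ideal R, I.IsInQ ∧ ∀ a ∈ I, a • x ∈ N0)
    (g₁ g₂ : L →ₗ[R] F) (h : ∀ z ∈ N0, g₁ z = g₂ z) : g₁ = g₂ := by
  ext x
  obtain ⟨I, hI, hIx⟩ := htor x
  have h0 : g₁ x - g₂ x = 0 := hQTF _ ⟨I, hI, fun a ha => by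
    rw [smul_sub, ← map_smul, ← map_smul, h _ (hIx a ha), sub_self]⟩
  exact sub_eq_zero.1 h0

/-- Let `T = tor_𝒬(M)` and let `L` be a Lucas module containing `M/T` as an
essential submodule (via an injection `ι`) with `L/(M/T)` `𝒬`-torsion. Then the composite
`φ : M ↠ M/T ↪ L` is an `ℒ`-envelope of `M` with the unique mapping property. -/
theorem composite_is_lucas_envelope_with_ump (R : Type u) [CommRing R]
    (M : Type u) [AddCommGroup M] [Module R M]
    (T : Submodule R M)
    (hT : ∀ x : M, x ∈ T ↔ ∃ I : Ideal R, I.IsInQ ∧ ∀ a ∈ I, a • x = 0)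
    (L : Type u) [AddCommGroup L] [Module R L] (hL : IsLucasModule R L)
    (ι : (M ⧸ T) →ₗ[R] L) (hinj : Function.Injective ι)
    (hess : ∀ N : Submodule R L, LinearMap.range ι ⊓ N = ⊥ → N = ⊥)
    (htor : IsQTorsion R (L ⧸ LinearMap.range ι)) :
    (∀ F' : ModuleCat.{u} R, IsLucasModule R F' →
      Function.Surjective (fun h : L →ₗ[R] F' => h.comp (ι.comp T.mkQ))) ∧
    (∀ h : L →ₗ[R] L, h.comp (ι.comp T.mkQ) = ι.comp T.mkQ → Function.Bijective h) ∧
    (∀ F' : ModuleCat.{u} R, IsLucasModule R F' → ∀ f' : M →ₗ[R] F',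
      ∃! g : L →ₗ[R] F', g.comp (ι.comp T.mkQ) = f') := by
  set φ := ι.comp T.mkQ with hφ
  have hrange : ∀ x : L, ∃ I : Ideal R, I.IsInQ ∧ ∀ a ∈ I, a • x ∈ LinearMap.range ι := by
    intro x
    obtain ⟨I, hI, hIx⟩ := htor (Submodule.Quotient.mk x)
    refine ⟨I, hI, fun a ha => ?_⟩
    have h1 := hIx a ha
    rwa [← Submodule.Quotient.mk_smul, Submodule.Quotient.mk_eq_zero] at h1
  have main : ∀ F' : ModuleCat.{u} R, IsLucasModule R F' → ∀ f' : M →ₗ[R] F',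
      ∃! g : L →ₗ[R] F', g.comp φ = f' := by
    intro F' hF' f'
    have hkill : T ≤ LinearMap.ker f' := by
      intro t ht
      rw [LinearMap.mem_ker]
      obtain ⟨I, hI, hIt⟩ := (hT t).1 ht
      exact hF'.1 _ ⟨I, hI, fun a ha => by rw [← map_smul, hIt a ha, map_zero]⟩
    set fbar := T.liftQ f' hkill with hfb
    set e := LinearEquiv.ofInjective ι hinj with he
    set f0 : (LinearMap.range ι) →ₗ[R] F' := fbar.comp (e.symm.toLinearMap) with hf0
    obtain ⟨g, hg⟩ := lucas_extend hF' (LinearMap.range ι) hrange f0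
    have hgφ : g.comp φ = f' := by
      ext mm
      show g (ι (T.mkQ mm)) = f' mm
      have h1 : g (ι (T.mkQ mm)) = f0 ⟨ι (T.mkQ mm), ⟨T.mkQ mm, rfl⟩⟩ :=
        hg ⟨ι (T.mkQ mm), ⟨T.mkQ mm, rfl⟩⟩
      rw [h1, hf0]
      show fbar (e.symm ⟨ι (T.mkQ mm), ⟨T.mkQ mm, rfl⟩⟩) = f' mm
      have h2 : e.symm ⟨ι (T.mkQ mm), ⟨T.mkQ mm, rfl⟩⟩ = T.mkQ mm := by
        rw [LinearEquiv.symm_apply_eq]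
        apply Subtype.ext
        simp [he]
      rw [h2]
      exact T.liftQ_apply f' mm
    refine ⟨g, hgφ, ?_⟩
    intro g' hg'
    apply lucas_unique_aux hF'.1 (LinearMap.range ι) hrange
    rintro z ⟨w, rfl⟩
    obtain ⟨mm, rfl⟩ := T.mkQ_surjective w
    exact congrArg (fun (h : M →ₗ[R] F') => h mm) (hg'.trans hgφ.symm)
  refine ⟨?_, ?_, main⟩
  · intro F' hF' f'
    obtain ⟨g, hg, _⟩ := main F' hF' f'
    exact ⟨g, hg⟩
  · intro h hcomp
    have hid : ∀ x : L, h x = x := by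
      intro x
      obtain ⟨I, hI, hIx⟩ := hrange x
      have h0 : h x - x = 0 := hL.1 _ ⟨I, hI, fun a ha => by
        obtain ⟨w, hw⟩ := hIx a ha
        have hfix : h (a • x) = a • x := by
          obtain ⟨mm, rfl⟩ := T.mkQ_surjective w
          rw [← hw]
          exact congrArg (fun (f : M →ₗ[R] L) => f mm) hcomp
        rw [smul_sub, ← map_smul, hfix, sub_self]⟩
      exact sub_eq_zero.1 h0
    exact ⟨fun a b hab => by rw [← hid a, hab, hid b], fun b => ⟨b, hid b⟩⟩
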